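/- arXiv:0908.3929 — 5 statements merged into one kernel-verified Lean document; each statement's English description precedes it below -/
import Mathlib

section
/- Let 0 < v < 1 and let (X,Y), (x,y) ∈ ℝ². Define T := (√((1−v²)(X−x)² + (Y−y)²) − v(Y−y))/(1−v²). Then T ≥ 0, the Euclidean distance from (X,Y) to (x, y + vT) equals T, and for every T' ≥ 0 such that the Euclidean distance from (X,Y) to (x, y + vT') is at most T', one has T ≤ T'. In other words, T is the minimum time for a unit-speed vehicle starting at (X,Y) to intercept a target that starts at (x,y) and moves with constant velocity (0,v). -/
/-- minimality of the interception time `T` for a unit-speed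
vehicle starting at `(X,Y)` chasing a target starting at `(x,y)` with
velocity `(0,v)`, where `0 < v < 1`. -/
theorem stmt0 (v X Y x y T : ℝ) (hv0 : 0 < v) (hv1 : v < 1)
    (hT : T = (Real.sqrt ((1 - v ^ 2) * (X - x) ^ 2 + (Y - y) ^ 2) - v * (Y - y)) / (1 - v ^ 2)) :
    0 ≤ T ∧
    Real.sqrt ((X - x) ^ 2 + (Y - (y + v * T)) ^ 2) = T ∧
    ∀ T' : ℝ, 0 ≤ T' →
      Real.sqrt ((X - x) ^ 2 + (Y - (y + v * T')) ^ 2) ≤ T' → T ≤ T' := by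
  have hv2 : 0 < 1 - v ^ 2 := by nlinarith
  set a := X - x with ha
  set b := Y - y with hb
  have hs0 : 0 ≤ (1 - v ^ 2) * a ^ 2 + b ^ 2 := by positivity
  set s := Real.sqrt ((1 - v ^ 2) * a ^ 2 + b ^ 2) with hs
  have hsq : s ^ 2 = (1 - v ^ 2) * a ^ 2 + b ^ 2 := Real.sq_sqrt hs0
  have hsnn : 0 ≤ s := Real.sqrt_nonneg _
  have hT0 : 0 ≤ T := by
    rw [hT]
    apply div_nonneg _ hv2.le
    nlinarith [sq_nonneg (s - v * b), sq_nonneg (s + v * b), sq_nonneg a]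
  refine ⟨hT0, ?_, ?_⟩
  · have key : a ^ 2 + (Y - (y + v * T)) ^ 2 = T ^ 2 := by
      have hbb : Y - (y + v * T) = b - v * T := by rw [hb]; ring
      have hsq' := hsq
      simp only [ha, hb] at hsq'
      rw [hbb, hT]
      field_simp
      linear_combination -((1 - v ^ 2)) * hsq'
    rw [key, Real.sqrt_sq hT0]
  · intro T' hT'0 hle
    have harg : 0 ≤ a ^ 2 + (Y - (y + v * T')) ^ 2 := by positivity
    have h2 : a ^ 2 + (b - v * T') ^ 2 ≤ T' ^ 2 := by
      have hbb : Y - (y + v * T') = b - v * T' := by rw [hb]; ring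
      have h3 := Real.sq_sqrt harg
      rw [hbb] at h3 hle
      nlinarith [Real.sqrt_nonneg (a ^ 2 + (b - v * T') ^ 2), h3, hle]
    have hR : 0 ≤ (1 - v ^ 2) * T' + v * b := by
      nlinarith [sq_nonneg a, sq_nonneg (T' - (b - v * T')), sq_nonneg (T' + (b - v * T'))]
    have hsR : s ≤ (1 - v ^ 2) * T' + v * b := by
      nlinarith [hsq, h2, hsnn, hR]
    rw [hT, div_le_iff₀ hv2]
    linarith
end

section
/- Let 0 < v < 1 and let p₀, p₁, …, pₙ be points in ℝ² with pᵢ = (xᵢ, yᵢ). For points p = (X,Y) and q = (x,y) define T_v(p,q) := (√((1−v²)(X−x)² + (Y−y)²) − v(Y−y))/(1−v²), and define g : ℝ² → ℝ² by g(x,y) = (x/√(1−v²), y/(1−v²)). Then Σ_{i=0}^{n−1} T_v(pᵢ, p_{i+1}) = Σ_{i=0}^{n−1} ‖g(p_{i+1}) − g(pᵢ)‖ + v(yₙ − y₀)/(1−v²). That is, the total time for a unit-speed vehicle to sequentially intercept targets that all translate with velocity (0,v), visiting them in the order p₁,…,pₙ starting from p₀, equals the Euclidean length of the polygonal path through the transformed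 points g(p₀),…,g(pₙ) plus a term depending only on the initial and final y-coordinates. -/
open scoped BigOperators

/-- The minimum interception time for a unit-speed vehicle at `p = (X,Y)`
to catch a target starting at `q = (x,y)` moving with velocity `(0,v)`. -/
noncomputable def Tv (v : ℝ) (p q : ℝ × ℝ) : ℝ :=
  (Real.sqrt ((1 - v ^ 2) * (p.1 - q.1) ^ 2 + (p.2 - q.2) ^ 2) - v * (p.2 - q.2)) / (1 - v ^ 2)

/-- The coordinate transformation `g(x,y) = (x/√(1−v²), y/(1−v²))`, valued in
the Euclidean plane. -/
noncomputable def gmap (v : ℝ) (p : ℝ × ℝ) : EuclideanSpace ℝ (Fin 2) :=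
  (WithLp.equiv 2 (Fin 2 → ℝ)).symm ![p.1 / Real.sqrt (1 - v ^ 2), p.2 / (1 - v ^ 2)]

lemma tel : ∀ (n : ℕ) (f : Fin (n + 1) → ℝ),
    ∑ i : Fin n, (f i.succ - f i.castSucc) = f (Fin.last n) - f 0 := by
  intro n
  induction n with
  | zero => intro f; simp
  | succ m ih =>
    intro f
    rw [Fin.sum_univ_castSucc]
    simp only [Fin.succ_castSucc]
    rw [ih (fun i => f i.castSucc)]
    simp [Fin.succ_last]

lemma key (v : ℝ) (hv0 : 0 < v) (hv1 : v < 1) (p q : ℝ × ℝ) :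
    Tv v p q = ‖gmap v q - gmap v p‖ + v * (q.2 - p.2) / (1 - v ^ 2) := by
  have hc : (0:ℝ) < 1 - v ^ 2 := by nlinarith
  have hs : Real.sqrt (1 - v ^ 2) ^ 2 = 1 - v ^ 2 := Real.sq_sqrt hc.le
  have hs0 : (0:ℝ) < Real.sqrt (1 - v ^ 2) := Real.sqrt_pos.2 hc
  have hnorm : ‖gmap v q - gmap v p‖
      = Real.sqrt ((1 - v ^ 2) * (p.1 - q.1) ^ 2 + (p.2 - q.2) ^ 2) / (1 - v ^ 2) := by
    rw [← dist_eq_norm, EuclideanSpace.dist_eq, Fin.sum_univ_two]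
    simp only [gmap, WithLp.equiv_symm_apply, WithLp.ofLp_toLp, Matrix.cons_val_zero, Matrix.cons_val_one,
      Matrix.head_cons, Real.dist_eq, sq_abs]
    have h1 : (q.1 / Real.sqrt (1 - v ^ 2) - p.1 / Real.sqrt (1 - v ^ 2)) ^ 2
        + (q.2 / (1 - v ^ 2) - p.2 / (1 - v ^ 2)) ^ 2
        = ((1 - v ^ 2) * (p.1 - q.1) ^ 2 + (p.2 - q.2) ^ 2) / (1 - v ^ 2) ^ 2 := by
      field_simp
      rw [hs]; ring
    rw [h1, Real.sqrt_div (by positivity), Real.sqrt_sq hc.le]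
  rw [hnorm, Tv]
  field_simp
  ring

/-- the total sequential interception time along the order
`p₀, p₁, …, pₙ` equals the Euclidean length of the polygonal path through
`g(p₀),…,g(pₙ)` plus `v(yₙ − y₀)/(1 − v²)`. -/
theorem stmt2 (v : ℝ) (hv0 : 0 < v) (hv1 : v < 1) (n : ℕ)
    (p : Fin (n + 1) → ℝ × ℝ) :
    ∑ i : Fin n, Tv v (p i.castSucc) (p i.succ)
      = (∑ i : Fin n, ‖gmap v (p i.succ) - gmap v (p i.castSucc)‖)
        + v * ((p (Fin.last n)).2 - (p 0).2) / (1 - v ^ 2) := by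
  have h : ∀ i : Fin n, Tv v (p i.castSucc) (p i.succ)
      = ‖gmap v (p i.succ) - gmap v (p i.castSucc)‖
        + v * ((p i.succ).2 - (p i.castSucc).2) / (1 - v ^ 2) :=
    fun i => key v hv0 hv1 _ _
  rw [Finset.sum_congr rfl (fun i _ => h i), Finset.sum_add_distrib]
  congr 1
  have htel := tel n (fun i => (p i).2)
  rw [← htel, Finset.mul_sum, Finset.sum_div]
end

section
/- (Reachability characterization.) Let v > 0 and let (X,Y), (x,y) ∈ ℝ². There exists T ≥ 0 such that the Euclidean distance from (X,Y) to (x, y + vT) is at most T and y + vT ≤ Y, if and only if v·|X − x| ≤ Y − y. In words: a unit-speed vehicle at (X,Y) can intercept a target at (x,y) moving with velocity (0,v) at a meeting point whose height does not exceed Y, exactly when v|X−x| ≤ Y − y. -/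
/-- Reachability characterization: a unit-speed vehicle at
`(X,Y)` can intercept a target at `(x,y)` moving with velocity `(0,v)` at a
meeting point of height at most `Y` iff `v·|X − x| ≤ Y − y`. -/
theorem stmt4 (v X Y x y : ℝ) (hv : 0 < v) :
    (∃ T : ℝ, 0 ≤ T ∧ Real.sqrt ((X - x) ^ 2 + (Y - (y + v * T)) ^ 2) ≤ T ∧
      y + v * T ≤ Y)
    ↔ v * |X - x| ≤ Y - y := by
  constructor
  · rintro ⟨T, hT, hsq, hle⟩
    have h1 : |X - x| ≤ T := by
      calc |X - x| = Real.sqrt ((X - x) ^ 2) := (Real.sqrt_sq_eq_abs _).symm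
        _ ≤ Real.sqrt ((X - x) ^ 2 + (Y - (y + v * T)) ^ 2) :=
            Real.sqrt_le_sqrt (by nlinarith)
        _ ≤ T := hsq
    nlinarith
  · intro h
    have habs : 0 ≤ |X - x| := abs_nonneg _
    have hYy : 0 ≤ Y - y := le_trans (by positivity) h
    refine ⟨(Y - y) / v, by positivity, ?_, ?_⟩
    · have hz : Y - (y + v * ((Y - y) / v)) = 0 := by field_simp; ring
      rw [hz]
      have : Real.sqrt ((X - x) ^ 2 + 0 ^ 2) = |X - x| := by
        simp [Real.sqrt_sq_eq_abs]
      rw [this, le_div_iff₀ hv]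
      linarith
    · have : v * ((Y - y) / v) = Y - y := by field_simp
      linarith
end

section
/- (Asymptotic equality of EMHP and ETSP.) Let E ⊆ ℝ² be a bounded set, let s, f ∈ E, let (Qₙ) be a sequence of finite subsets of E with |Qₙ| → ∞ as n → ∞, and let c ∈ ℝ. If ETSP(Qₙ)/√|Qₙ| → c as n → ∞, then EMHP(s, Qₙ, f)/√|Qₙ| → c as n → ∞. -/
/-- Euclidean length of a polygonal path through a list of points. -/
noncomputable def pathLength : List (EuclideanSpace ℝ (Fin 2)) → ℝ
  | [] => 0
  | [_] => 0
  | p :: q :: rest => ‖q - p‖ + pathLength (q :: rest)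

/-- Euclidean length of the closed tour through a list of points (the path
through the list followed by the return edge to the starting point); `0` for
lists with at most one point. -/
noncomputable def tourLength : List (EuclideanSpace ℝ (Fin 2)) → ℝ
  | [] => 0
  | p :: rest => pathLength ((p :: rest) ++ [p])

/-- `ETSP Q`: the minimum, over all orderings of the finite set `Q`, of the
length of the closed tour through `Q` (equal to `0` when `|Q| ≤ 1`). -/
noncomputable def ETSP (Q : Finset (EuclideanSpace ℝ (Fin 2))) : ℝ :=
  sInf {c : ℝ | ∃ l : List (EuclideanSpace ℝ (Fin 2)), l.Nodup ∧ (∀ x, x ∈ l ↔ x ∈ Q) ∧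
    c = tourLength l}

/-- `EMHP s Q f`: the minimum, over all orderings of the finite set `Q`, of the
Euclidean length of the path starting at `s`, visiting every point of `Q`
exactly once, and terminating at `f`. -/
noncomputable def EMHP (s : EuclideanSpace ℝ (Fin 2)) (Q : Finset (EuclideanSpace ℝ (Fin 2)))
    (f : EuclideanSpace ℝ (Fin 2)) : ℝ :=
  sInf {c : ℝ | ∃ l : List (EuclideanSpace ℝ (Fin 2)), l.Nodup ∧ (∀ x, x ∈ l ↔ x ∈ Q) ∧
    c = pathLength (s :: (l ++ [f]))}

local notation "Pt" => EuclideanSpace ℝ (Fin 2)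

lemma pathLength_nonneg : ∀ l : List Pt, 0 ≤ pathLength l
  | [] => le_refl 0
  | [_] => le_refl 0
  | p :: q :: rest => by
      rw [pathLength]
      exact add_nonneg (norm_nonneg _) (pathLength_nonneg (q :: rest))

lemma pathLength_concat : ∀ (l : List Pt) (h : l ≠ []) (x : Pt),
    pathLength (l ++ [x]) = pathLength l + ‖x - l.getLast h‖
  | [], h, x => absurd rfl h
  | [a], _, x => by simp [pathLength]
  | a :: b :: t, _, x => by
      have ih := pathLength_concat (b :: t) (by simp) x
      simp only [List.cons_append] at ih ⊢
      rw [pathLength, ih, pathLength, List.getLast_cons (by simp : (b :: t) ≠ [])]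
      ring

lemma tourLength_eq (a : Pt) (t : List Pt) :
    tourLength (a :: t) = pathLength (a :: t) + ‖a - (a :: t).getLast (by simp)‖ := by
  rw [tourLength, pathLength_concat (a :: t) (by simp) a]

lemma tourLength_nonneg : ∀ l : List Pt, 0 ≤ tourLength l
  | [] => le_refl 0
  | a :: t => by rw [tourLength]; exact pathLength_nonneg _

-- the set for ETSP
def TSet (Q : Finset Pt) : Set ℝ :=
  {c : ℝ | ∃ l : List Pt, l.Nodup ∧ (∀ x, x ∈ l ↔ x ∈ Q) ∧ c = tourLength l}

def HPSet (s : Pt) (Q : Finset Pt) (f : Pt) : Set ℝ :=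
  {c : ℝ | ∃ l : List Pt, l.Nodup ∧ (∀ x, x ∈ l ↔ x ∈ Q) ∧ c = pathLength (s :: (l ++ [f]))}

lemma TSet_nonempty (Q : Finset Pt) : (TSet Q).Nonempty :=
  ⟨tourLength Q.toList, Q.toList, Q.nodup_toList, fun x => Finset.mem_toList, rfl⟩

lemma PSet_nonempty (s : Pt) (Q : Finset Pt) (f : Pt) : (HPSet s Q f).Nonempty :=
  ⟨_, Q.toList, Q.nodup_toList, fun x => Finset.mem_toList, rfl⟩

lemma TSet_bdd (Q : Finset Pt) : BddBelow (TSet Q) :=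
  ⟨0, fun c ⟨l, _, _, hc⟩ => hc ▸ tourLength_nonneg l⟩

lemma PSet_bdd (s : Pt) (Q : Finset Pt) (f : Pt) : BddBelow (HPSet s Q f) :=
  ⟨0, fun c ⟨l, _, _, hc⟩ => hc ▸ pathLength_nonneg _⟩

lemma key_s9 (E : Set Pt) (D : ℝ) (hD : ∀ x ∈ E, ∀ y ∈ E, dist x y ≤ D)
    (s f : Pt) (hs : s ∈ E) (hf : f ∈ E) (Q : Finset Pt) (hQE : ↑Q ⊆ E) (hQ : Q.Nonempty) :
    ETSP Q - D ≤ EMHP s Q f ∧ EMHP s Q f ≤ ETSP Q + 2 * D := by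
  have hET : ETSP Q = sInf (TSet Q) := rfl
  have hEM : EMHP s Q f = sInf (HPSet s Q f) := rfl
  -- basic facts about any admissible list
  have hlist : ∀ (l : List Pt), (∀ x, x ∈ l ↔ x ∈ Q) → l ≠ [] := by
    intro l hmem hnil
    obtain ⟨q, hq⟩ := hQ
    exact absurd ((hmem q).2 hq) (by simp [hnil])
  constructor
  · -- ETSP - D ≤ EMHP : for every element a of HPSet, ETSP ≤ a + D
    rw [hEM]
    refine le_csInf (PSet_nonempty s Q f) ?_
    rintro b ⟨l, hnd, hmem, rfl⟩
    obtain ⟨a, t, rfl⟩ := List.exists_cons_of_ne_nil (hlist l hmem)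
    have ha : a ∈ E := hQE ((hmem a).1 (by simp))
    have hlast : (a :: t).getLast (by simp) ∈ E :=
      hQE ((hmem _).1 (List.getLast_mem _))
    have hpath : pathLength (s :: ((a :: t) ++ [f]))
        = ‖a - s‖ + (pathLength (a :: t) + ‖f - (a :: t).getLast (by simp)‖) := by
      show pathLength (s :: a :: (t ++ [f])) = _
      rw [pathLength, ← List.cons_append, pathLength_concat (a :: t) (by simp) f]
    have h1 : ETSP Q ≤ tourLength (a :: t) :=
      csInf_le (TSet_bdd Q) ⟨a :: t, hnd, hmem, rfl⟩
    have h2 : tourLength (a :: t) ≤ pathLength (s :: ((a :: t) ++ [f])) + D := by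
      rw [tourLength_eq, hpath]
      have : ‖a - (a :: t).getLast (by simp)‖ ≤ D := by
        rw [← dist_eq_norm]; exact hD a ha _ hlast
      nlinarith [norm_nonneg (a - s), norm_nonneg (f - (a :: t).getLast (by simp : a :: t ≠ []))]
    linarith
  · -- EMHP ≤ ETSP + 2D : for every element b of TSet, EMHP ≤ b + 2D
    rw [← sub_le_iff_le_add, hET]
    refine le_csInf (TSet_nonempty Q) ?_
    rintro b ⟨l, hnd, hmem, rfl⟩
    obtain ⟨a, t, rfl⟩ := List.exists_cons_of_ne_nil (hlist l hmem)
    have ha : a ∈ E := hQE ((hmem a).1 (by simp))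
    have hlast : (a :: t).getLast (by simp) ∈ E :=
      hQE ((hmem _).1 (List.getLast_mem _))
    have hpath : pathLength (s :: ((a :: t) ++ [f]))
        = ‖a - s‖ + (pathLength (a :: t) + ‖f - (a :: t).getLast (by simp)‖) := by
      show pathLength (s :: a :: (t ++ [f])) = _
      rw [pathLength, ← List.cons_append, pathLength_concat (a :: t) (by simp) f]
    have h1 : EMHP s Q f ≤ pathLength (s :: ((a :: t) ++ [f])) :=
      csInf_le (PSet_bdd s Q f) ⟨a :: t, hnd, hmem, rfl⟩
    have h2 : pathLength (s :: ((a :: t) ++ [f])) ≤ tourLength (a :: t) + 2 * D := by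
      rw [tourLength_eq, hpath]
      have e1 : ‖a - s‖ ≤ D := by rw [← dist_eq_norm]; exact hD a ha s hs
      have e2 : ‖f - (a :: t).getLast (by simp)‖ ≤ D := by
        rw [← dist_eq_norm]; exact hD f hf _ hlast
      nlinarith [norm_nonneg (a - (a :: t).getLast (by simp : a :: t ≠ []))]
    linarith

open Filter

/-- Asymptotic equality of EMHP and ETSP: if `E` is bounded,
`s, f ∈ E`, `Qₙ ⊆ E` are finite sets with `|Qₙ| → ∞`, and
`ETSP(Qₙ)/√|Qₙ| → c`, then `EMHP(s,Qₙ,f)/√|Qₙ| → c`. -/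
theorem stmt9 (E : Set (EuclideanSpace ℝ (Fin 2))) (hE : Bornology.IsBounded E)
    (s f : EuclideanSpace ℝ (Fin 2)) (hs : s ∈ E) (hf : f ∈ E)
    (Q : ℕ → Finset (EuclideanSpace ℝ (Fin 2))) (hQE : ∀ n, ↑(Q n) ⊆ E)
    (hcard : Tendsto (fun n => (Q n).card) atTop atTop) (c : ℝ)
    (hETSP : Tendsto (fun n => ETSP (Q n) / Real.sqrt ((Q n).card)) atTop (nhds c)) :
    Tendsto (fun n => EMHP s (Q n) f / Real.sqrt ((Q n).card)) atTop (nhds c) := by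
  obtain ⟨D, hD⟩ := Metric.isBounded_iff.1 hE
  have hDfun : ∀ x ∈ E, ∀ y ∈ E, dist x y ≤ D := fun x hx y hy => hD hx hy
  have hsq : Tendsto Real.sqrt atTop atTop := by
    refine tendsto_atTop_atTop.2 fun b => ⟨max 0 b ^ 2, fun a ha => ?_⟩
    refine le_trans (le_max_right 0 b) ?_
    rw [← Real.sqrt_sq (le_max_left 0 b)]
    exact Real.sqrt_le_sqrt ha
  have hsqrt : Tendsto (fun n => Real.sqrt ((Q n).card)) atTop atTop :=
    hsq.comp (tendsto_natCast_atTop_atTop.comp hcard)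
  have hev : ∀ᶠ n in atTop, (Q n).Nonempty := by
    filter_upwards [hcard.eventually_ge_atTop 1] with n hn
    exact Finset.card_pos.1 hn
  have hposev : ∀ᶠ n in atTop, 0 < Real.sqrt ((Q n).card) := by
    filter_upwards [hev] with n hn
    exact Real.sqrt_pos.2 (by exact_mod_cast Finset.card_pos.2 hn)
  have hzero : Tendsto (fun n => D / Real.sqrt ((Q n).card)) atTop (nhds 0) :=
    Tendsto.div_atTop tendsto_const_nhds hsqrt
  have hlow : Tendsto (fun n => (ETSP (Q n) - D) / Real.sqrt ((Q n).card)) atTop (nhds c) := by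
    have h := hETSP.sub hzero
    rw [sub_zero] at h
    simpa [sub_div] using h
  have hzero2 : Tendsto (fun n => 2 * D / Real.sqrt ((Q n).card)) atTop (nhds 0) :=
    Tendsto.div_atTop tendsto_const_nhds hsqrt
  have hup : Tendsto (fun n => (ETSP (Q n) + 2 * D) / Real.sqrt ((Q n).card)) atTop (nhds c) := by
    have h := hETSP.add hzero2
    rw [add_zero] at h
    simpa [add_div] using h
  refine tendsto_of_tendsto_of_tendsto_of_le_of_le' hlow hup ?_ ?_
  · filter_upwards [hev, hposev] with n hn hpos
    have := (key_s9 E D hDfun s f hs hf (Q n) (hQE n) hn).1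
    exact div_le_div_of_nonneg_right this hpos.le
  · filter_upwards [hev, hposev] with n hn hpos
    have := (key_s9 E D hDfun s f hs hf (Q n) (hQE n) hn).2
    exact div_le_div_of_nonneg_right this hpos.le
end

section
/- (Order-optimality transfer under the transformation g.) Let 0 < v < 1, let s = (x_s,y_s), f = (x_f,y_f) ∈ ℝ², and let q₁,…,qₙ ∈ ℝ² be distinct points. For p = (X,Y), q = (x,y) ∈ ℝ² define T_v(p,q) := (√((1−v²)(X−x)² + (Y−y)²) − v(Y−y))/(1−v²), and g(x,y) := (x/√(1−v²), y/(1−v²)). For a permutation σ of {1,…,n}, let Time(σ) := T_v(s, q_{σ(1)}) + Σ_{i=1}^{n−1} T_v(q_{σ(i)}, q_{σ(i+1)}) + T_v(q_{σ(n)}, f), and let Len(σ) := ‖g(q_{σ(1)}) − g(s)‖ + Σ_{i=1}^{n−1} ‖g(q_{σ(i+1)}) − g(q_{σ(i)})‖ + ‖g(f) − g(q_{σ(n)})‖. Then Time(σ) − Len(σ) = v(y_f − y_s)/(1−v²) for every permutation σ; in particular, a permutation σ minimizes Time if and only if it minimizes Len. -/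
open scoped BigOperators

lemma gmap_norm_sub (v : ℝ) (hv0 : 0 < v) (hv1 : v < 1) (p q : ℝ × ℝ) :
    ‖gmap v p - gmap v q‖
      = Real.sqrt ((1 - v ^ 2) * (p.1 - q.1) ^ 2 + (p.2 - q.2) ^ 2) / (1 - v ^ 2) := by
  have hw : (0:ℝ) < 1 - v ^ 2 := by nlinarith
  have hsw : Real.sqrt (1 - v ^ 2) > 0 := Real.sqrt_pos.mpr hw
  have hsq : Real.sqrt (1 - v ^ 2) ^ 2 = 1 - v ^ 2 := Real.sq_sqrt hw.le
  have hap : ∀ (a b : Fin 2 → ℝ) (i : Fin 2),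
      ((WithLp.equiv 2 (Fin 2 → ℝ)).symm a - (WithLp.equiv 2 (Fin 2 → ℝ)).symm b) i
        = a i - b i := fun a b i => rfl
  rw [EuclideanSpace.norm_eq]
  simp only [gmap, Real.norm_eq_abs, sq_abs]
  rw [Fin.sum_univ_two]
  simp only [hap, Matrix.cons_val_zero, Matrix.cons_val_one, Matrix.head_cons]
  have h1 : (p.1 / Real.sqrt (1 - v ^ 2) - q.1 / Real.sqrt (1 - v ^ 2)) ^ 2
      + (p.2 / (1 - v ^ 2) - q.2 / (1 - v ^ 2)) ^ 2
      = ((1 - v ^ 2) * (p.1 - q.1) ^ 2 + (p.2 - q.2) ^ 2) / (1 - v ^ 2) ^ 2 := by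
    field_simp
    ring_nf
    rw [hsq]; ring
  rw [h1, Real.sqrt_div (by positivity)]
  rw [Real.sqrt_sq hw.le]

lemma Tv_eq (v : ℝ) (hv0 : 0 < v) (hv1 : v < 1) (p q : ℝ × ℝ) :
    Tv v p q = ‖gmap v p - gmap v q‖ + v * (q.2 - p.2) / (1 - v ^ 2) := by
  rw [gmap_norm_sub v hv0 hv1 p q, Tv]
  have hw : (1:ℝ) - v ^ 2 ≠ 0 := by nlinarith
  field_simp
  ring

/-- Order-optimality transfer under the transformation `g`:
for every ordering `σ` of the distinct points `q₁,…,qₙ`,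
`Time(σ) − Len(σ) = v(y_f − y_s)/(1 − v²)`; in particular `σ` minimizes `Time`
iff it minimizes `Len`. -/
theorem stmt16 (v : ℝ) (hv0 : 0 < v) (hv1 : v < 1) (s f : ℝ × ℝ) (n : ℕ)
    (q : Fin (n + 1) → ℝ × ℝ) (hq : Function.Injective q)
    (Time Len : Equiv.Perm (Fin (n + 1)) → ℝ)
    (hTime : ∀ σ, Time σ
      = Tv v s (q (σ 0))
        + (∑ i : Fin n, Tv v (q (σ i.castSucc)) (q (σ i.succ)))
        + Tv v (q (σ (Fin.last n))) f)
    (hLen : ∀ σ, Len σ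
      = ‖gmap v (q (σ 0)) - gmap v s‖
        + (∑ i : Fin n, ‖gmap v (q (σ i.succ)) - gmap v (q (σ i.castSucc))‖)
        + ‖gmap v f - gmap v (q (σ (Fin.last n)))‖) :
    (∀ σ, Time σ - Len σ = v * (f.2 - s.2) / (1 - v ^ 2)) ∧
    (∀ σ, (∀ τ, Time σ ≤ Time τ) ↔ (∀ τ, Len σ ≤ Len τ)) := by
  have hw : (1:ℝ) - v ^ 2 ≠ 0 := by nlinarith
  have key : ∀ σ, Time σ - Len σ = v * (f.2 - s.2) / (1 - v ^ 2) := by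
    intro σ
    rw [hTime σ, hLen σ]
    -- rewrite each Tv term
    rw [Tv_eq v hv0 hv1 s (q (σ 0)), Tv_eq v hv0 hv1 (q (σ (Fin.last n))) f]
    have hsum : (∑ i : Fin n, Tv v (q (σ i.castSucc)) (q (σ i.succ)))
        = (∑ i : Fin n, ‖gmap v (q (σ i.castSucc)) - gmap v (q (σ i.succ))‖)
          + ∑ i : Fin n, v * ((q (σ i.succ)).2 - (q (σ i.castSucc)).2) / (1 - v ^ 2) := by
      rw [← Finset.sum_add_distrib]
      exact Finset.sum_congr rfl fun i _ => Tv_eq v hv0 hv1 _ _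
    rw [hsum]
    have hns : ∀ a b : EuclideanSpace ℝ (Fin 2), ‖a - b‖ = ‖b - a‖ := fun a b =>
      norm_sub_rev a b
    have hns1 : (∑ i : Fin n, ‖gmap v (q (σ i.castSucc)) - gmap v (q (σ i.succ))‖)
        = ∑ i : Fin n, ‖gmap v (q (σ i.succ)) - gmap v (q (σ i.castSucc))‖ :=
      Finset.sum_congr rfl fun i _ => hns _ _
    rw [hns1, hns (gmap v s) (gmap v (q (σ 0))), hns (gmap v (q (σ (Fin.last n)))) (gmap v f)]
    -- now reduce to telescoping
    have htel : (∑ i : Fin n, v * ((q (σ i.succ)).2 - (q (σ i.castSucc)).2) / (1 - v ^ 2))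
        = v * ((q (σ (Fin.last n))).2 - (q (σ 0)).2) / (1 - v ^ 2) := by
      set G : ℕ → ℝ := fun j => v * (q (σ ⟨j % (n + 1), Nat.mod_lt _ n.succ_pos⟩)).2 / (1 - v ^ 2)
        with hG
      have h1 : (∑ i : Fin n, v * ((q (σ i.succ)).2 - (q (σ i.castSucc)).2) / (1 - v ^ 2))
          = ∑ i ∈ Finset.range n, (G (i + 1) - G i) := by
        rw [← Fin.sum_univ_eq_sum_range]
        refine Finset.sum_congr rfl fun i _ => ?_
        have hi : (i : ℕ) % (n + 1) = i := Nat.mod_eq_of_lt (i.isLt.trans (Nat.lt_succ_self n))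
        have hi1 : ((i : ℕ) + 1) % (n + 1) = i + 1 := Nat.mod_eq_of_lt (Nat.succ_lt_succ i.isLt)
        have e1 : (⟨((i:ℕ) + 1) % (n + 1), Nat.mod_lt _ n.succ_pos⟩ : Fin (n+1)) = i.succ := by
          ext; simpa using hi1
        have e2 : (⟨(i:ℕ) % (n + 1), Nat.mod_lt _ n.succ_pos⟩ : Fin (n+1)) = i.castSucc := by
          ext; simpa using hi
        simp only [hG, e1, e2]
        ring
      rw [h1, Finset.sum_range_sub]
      have hn : n % (n + 1) = n := Nat.mod_eq_of_lt (Nat.lt_succ_self n)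
      have e1 : (⟨n % (n + 1), Nat.mod_lt _ n.succ_pos⟩ : Fin (n+1)) = Fin.last n := by
        ext; simpa using hn
      have e2 : (⟨0 % (n + 1), Nat.mod_lt _ n.succ_pos⟩ : Fin (n+1)) = 0 := by
        ext; simp
      simp only [hG, e1, e2]
      ring
    rw [htel]
    ring
  refine ⟨key, fun σ => ?_⟩
  constructor
  · intro h τ
    have h1 := key σ; have h2 := key τ
    have := h τ
    linarith
  · intro h τ
    have h1 := key σ; have h2 := key τ
    have := h τ
    linarith
end
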